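/- Let b ∈ ℝ. Set Ã(x) = 1 − (2/3)·b²·x² + (4/3)·b³·x³, B̃(x) = x + b·x², C̃(x) = −2b + (8/3)·b²·x − (8/3)·b³·x², and define f(x) = −(Ã′(x) − C̃(x))/Ã(x), g(x) = Ã(x)·B̃(x). Then there is a neighborhood of 0 on which g′(x) + f(x)·g(x) = 1 for all x. -/

import Mathlib

/-- Zero-Urabe-function isochronicity identity: with `Ã`, `B̃`, `C̃` as below and the
Liénard data `f(x) = −(Ã′(x) − C̃(x))/Ã(x)`, `g(x) = Ã(x)·B̃(x)`, the identity
`g′(x) + f(x)·g(x) = 1` holds on a neighborhood of `0`. -/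
theorem stmt_10 (b : ℝ) (A B C f g : ℝ → ℝ)
    (hA : ∀ x : ℝ, A x = 1 - (2/3)*b^2*x^2 + (4/3)*b^3*x^3)
    (hB : ∀ x : ℝ, B x = x + b*x^2)
    (hC : ∀ x : ℝ, C x = -2*b + (8/3)*b^2*x - (8/3)*b^3*x^2)
    (hf : ∀ x : ℝ, f x = -(deriv A x - C x) / A x)
    (hg : ∀ x : ℝ, g x = A x * B x) :
    ∃ ε > (0 : ℝ), ∀ x : ℝ, |x| < ε → deriv g x + f x * g x = 1 := by
  have hAfun : A = fun x => 1 - (2/3)*b^2*x^2 + (4/3)*b^3*x^3 := funext hA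
  have hBfun : B = fun x => x + b*x^2 := funext hB
  have hgfun : g = fun x => A x * B x := funext hg
  have hcont : ContinuousAt A 0 := by rw [hAfun]; fun_prop
  have hA0 : A 0 = 1 := by simp [hA]
  have hne : ∀ᶠ x in nhds (0:ℝ), A x ≠ 0 := by
    apply hcont.eventually_ne
    simp [hA0]
  rw [Metric.eventually_nhds_iff] at hne
  obtain ⟨ε, hε, hne⟩ := hne
  refine ⟨ε, hε, fun x hx => ?_⟩
  have hAx : A x ≠ 0 := hne (by simpa [Real.dist_eq] using hx)
  have h2 : HasDerivAt (fun x : ℝ => x^2) (2*x) x := by simpa using hasDerivAt_pow 2 x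
  have h3 : HasDerivAt (fun x : ℝ => x^3) (3*x^2) x := by simpa using hasDerivAt_pow 3 x
  have HA : HasDerivAt A (-(4/3)*b^2*x + 4*b^3*x^2) x := by
    rw [hAfun]
    have := ((hasDerivAt_const x (1:ℝ)).sub (h2.const_mul ((2:ℝ)/3*b^2))).add
      (h3.const_mul ((4:ℝ)/3*b^3))
    exact this.congr_deriv (by ring)
  have HB : HasDerivAt B (1 + 2*b*x) x := by
    rw [hBfun]
    have := (hasDerivAt_id x).add (h2.const_mul b)
    exact this.congr_deriv (by ring)
  have hdA : deriv A x = -(4/3)*b^2*x + 4*b^3*x^2 := HA.deriv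
  have hdg : deriv g x = (-(4/3)*b^2*x + 4*b^3*x^2) * B x + A x * (1 + 2*b*x) := by
    rw [hgfun]; exact (HA.mul HB).deriv
  have hfg : f x * g x = -(deriv A x - C x) * B x := by
    rw [hf, hg]
    field_simp
  rw [hdg, hfg, hdA, hA, hB, hC]
  ring
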